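/- Let f : [0,T] → Z be continuously differentiable into a Banach space Z and let t_k = kΔt be a uniform partition with NΔt = T. Then Δt·∑_{n=1}^N ‖∫_0^{t_n} f(t)dt − Δt·∑_{k=1}^n f(t_k)‖_Z² ≤ T²·(Δt)²·∫_0^T ‖f'(t)‖_Z² dt, i.e., the right-endpoint quadrature error is first order in Δt in this discrete norm. -/

import Mathlib

open Finset intervalIntegral MeasureTheory

private lemma cs_interval (g : ℝ → ℝ) (T : ℝ) (hT : 0 < T) (hg : Continuous g) :
    (∫ t in (0:ℝ)..T, g t) ^ 2 ≤ T * ∫ t in (0:ℝ)..T, (g t)^2 := by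
  set I := ∫ t in (0:ℝ)..T, g t with hI
  have h0 : (0:ℝ) ≤ ∫ t in (0:ℝ)..T, (g t - I/T)^2 :=
    intervalIntegral.integral_nonneg hT.le (fun t _ => sq_nonneg _)
  have hig : IntervalIntegrable g MeasureTheory.volume 0 T := hg.intervalIntegrable _ _
  have hig2 : IntervalIntegrable (fun t => (g t)^2) MeasureTheory.volume 0 T :=
    (hg.pow 2).intervalIntegrable _ _
  have hexp : (∫ t in (0:ℝ)..T, (g t - I/T)^2)
      = (∫ t in (0:ℝ)..T, (g t)^2) - 2*(I/T)*I + (I/T)^2 * T := by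
    have : (fun t => (g t - I/T)^2) = fun t => (g t)^2 - (2*(I/T)) * g t + (I/T)^2 := by
      funext t; ring
    rw [this, intervalIntegral.integral_add ((hig2.sub (hig.const_mul _))) intervalIntegrable_const,
      intervalIntegral.integral_sub hig2 (hig.const_mul _),
      intervalIntegral.integral_const_mul, intervalIntegral.integral_const]
    simp [← hI]; ring
  rw [hexp] at h0
  have : 2*(I/T)*I - (I/T)^2*T = I^2/T := by field_simp; ring
  have h1 : I^2/T ≤ ∫ t in (0:ℝ)..T, (g t)^2 := by linarith
  calc I^2 = T*(I^2/T) := by field_simp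
    _ ≤ T * ∫ t in (0:ℝ)..T, (g t)^2 := by nlinarith

open Finset in
/-- For `f ∈ C¹([0,T];Z)` with `Z` a Banach space and the uniform
partition `t_k = kΔt`, `NΔt = T`, the right-endpoint quadrature errors satisfy
`Δt·∑_{n=1}^N ‖∫_0^{t_n} f − Δt∑_{k=1}^n f(t_k)‖² ≤ T²(Δt)²∫_0^T ‖f'‖²`. -/
theorem right_endpoint_quadrature_error
    {Z : Type*} [NormedAddCommGroup Z] [NormedSpace ℝ Z] [CompleteSpace Z]
    (f : ℝ → Z) (T Δt : ℝ) (N : ℕ) (hN : 0 < N)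
    (hΔt : 0 < Δt) (hT : (N : ℝ) * Δt = T)
    (hf : ContDiff ℝ 1 f) :
    Δt * ∑ n ∈ Icc 1 N,
        ‖(∫ t in (0 : ℝ)..(n * Δt), f t) - Δt • ∑ k ∈ Icc 1 n, f (k * Δt)‖ ^ 2
      ≤ T ^ 2 * Δt ^ 2 * ∫ t in (0 : ℝ)..T, ‖deriv f t‖ ^ 2 := by
  have hT0 : 0 < T := hT ▸ mul_pos (Nat.cast_pos.mpr hN) hΔt
  have hfc : Continuous f := hf.continuous
  have hdc : Continuous (deriv f) := hf.continuous_deriv le_rfl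
  set g : ℝ → ℝ := fun t => ‖deriv f t‖ with hgdef
  have hgc : Continuous g := hdc.norm
  have hg0 : ∀ t, 0 ≤ g t := fun t => norm_nonneg _
  -- Per-interval quadrature error bound
  have key : ∀ a b : ℝ, a ≤ b →
      ‖(∫ t in a..b, f t) - (b - a) • f b‖ ≤ (b - a) * ∫ t in a..b, g t := by
    intro a b hab
    have h1 : (b - a) • f b = ∫ _t in a..b, f b := by rw [intervalIntegral.integral_const]
    rw [h1, ← intervalIntegral.integral_sub (hfc.intervalIntegrable _ _) intervalIntegrable_const]
    calc ‖∫ t in a..b, (f t - f b)‖ ≤ ∫ t in a..b, ‖f t - f b‖ :=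
          intervalIntegral.norm_integral_le_integral_norm hab
      _ ≤ ∫ _t in a..b, (∫ s in a..b, g s) := by
          apply intervalIntegral.integral_mono_on hab
            ((hfc.sub continuous_const).norm.intervalIntegrable _ _) intervalIntegrable_const
          intro t ht
          have hftc : f b - f t = ∫ s in t..b, deriv f s := by
            rw [intervalIntegral.integral_deriv_eq_sub
              (fun x _ => (hf.differentiable one_ne_zero).differentiableAt)
              (hdc.intervalIntegrable _ _)]
          calc ‖f t - f b‖ = ‖f b - f t‖ := norm_sub_rev _ _
            _ = ‖∫ s in t..b, deriv f s‖ := by rw [hftc]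
            _ ≤ ∫ s in t..b, g s := intervalIntegral.norm_integral_le_integral_norm ht.2
            _ ≤ ∫ s in a..b, g s := by
                rw [← intervalIntegral.integral_add_adjacent_intervals
                  (hgc.intervalIntegrable a t) (hgc.intervalIntegrable t b)]
                have h2 : (0:ℝ) ≤ ∫ s in a..t, g s :=
                  intervalIntegral.integral_nonneg ht.1 (fun _ _ => hg0 _)
                linarith
      _ = (b - a) * ∫ s in a..b, g s := by
          rw [intervalIntegral.integral_const, smul_eq_mul]
  -- Error bound for each n
  have En : ∀ n : ℕ, n ≤ N →
      ‖(∫ t in (0:ℝ)..(n * Δt), f t) - Δt • ∑ k ∈ Icc 1 n, f (k * Δt)‖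
        ≤ Δt * ∫ t in (0:ℝ)..T, g t := by
    intro n hn
    set a : ℕ → ℝ := fun i => i * Δt with hadef
    have ha0 : a 0 = 0 := by simp [hadef]
    have hsplit : (∫ t in (0:ℝ)..(n * Δt), f t) = ∑ i ∈ range n, ∫ t in a i..a (i+1), f t := by
      rw [intervalIntegral.sum_integral_adjacent_intervals
        (fun k _ => hfc.intervalIntegrable _ _), ha0]
    have hsum : Δt • ∑ k ∈ Icc 1 n, f (k * Δt) = ∑ i ∈ range n, Δt • f (a (i+1)) := by
      rw [Finset.smul_sum, ← Finset.Ico_add_one_right_eq_Icc, Finset.sum_Ico_eq_sum_range]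
      simp only [Nat.succ_sub_one, hadef]
      apply Finset.sum_congr rfl
      intro i _
      congr 2
      ring_nf
    have hstep : ∀ i : ℕ, a (i+1) - a i = Δt := by
      intro i; simp [hadef]; ring
    have hmono : ∀ i : ℕ, a i ≤ a (i+1) := by
      intro i; have := hstep i; linarith
    rw [hsplit, hsum, ← Finset.sum_sub_distrib]
    calc ‖∑ i ∈ range n, ((∫ t in a i..a (i+1), f t) - Δt • f (a (i+1)))‖
        ≤ ∑ i ∈ range n, ‖(∫ t in a i..a (i+1), f t) - Δt • f (a (i+1))‖ :=
          norm_sum_le _ _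
      _ ≤ ∑ i ∈ range n, Δt * ∫ t in a i..a (i+1), g t := by
          apply Finset.sum_le_sum
          intro i _
          have h := key (a i) (a (i+1)) (hmono i)
          rw [hstep i] at h
          exact h
      _ = Δt * ∫ t in (0:ℝ)..(n * Δt), g t := by
          rw [← Finset.mul_sum, intervalIntegral.sum_integral_adjacent_intervals
            (fun k _ => hgc.intervalIntegrable _ _), ha0]
      _ ≤ Δt * ∫ t in (0:ℝ)..T, g t := by
          apply mul_le_mul_of_nonneg_left _ hΔt.le
          have h2 : (n:ℝ) * Δt ≤ T := by
            rw [← hT]; exact mul_le_mul_of_nonneg_right (Nat.cast_le.mpr hn) hΔt.le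
          rw [← intervalIntegral.integral_add_adjacent_intervals
            (hgc.intervalIntegrable 0 ((n:ℝ) * Δt)) (hgc.intervalIntegrable ((n:ℝ) * Δt) T)]
          have h3 : (0:ℝ) ≤ ∫ s in ((n:ℝ) * Δt)..T, g s :=
            intervalIntegral.integral_nonneg h2 (fun _ _ => hg0 _)
          linarith
  -- Cauchy–Schwarz
  have CS := cs_interval g T hT0 hgc
  set J := ∫ t in (0:ℝ)..T, (g t)^2 with hJdef
  have hJ0 : (0:ℝ) ≤ J := intervalIntegral.integral_nonneg hT0.le (fun _ _ => sq_nonneg _)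
  have each : ∀ n ∈ Icc 1 N,
      ‖(∫ t in (0:ℝ)..(n * Δt), f t) - Δt • ∑ k ∈ Icc 1 n, f (k * Δt)‖ ^ 2
        ≤ Δt^2 * (T * J) := by
    intro n hn
    have h := En n (Finset.mem_Icc.mp hn).2
    have hsq : ‖(∫ t in (0:ℝ)..(n * Δt), f t) - Δt • ∑ k ∈ Icc 1 n, f (k * Δt)‖ ^ 2
        ≤ (Δt * ∫ t in (0:ℝ)..T, g t) ^ 2 := by
      apply pow_le_pow_left₀ (norm_nonneg _) h
    calc ‖(∫ t in (0:ℝ)..(n * Δt), f t) - Δt • ∑ k ∈ Icc 1 n, f (k * Δt)‖ ^ 2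
        ≤ (Δt * ∫ t in (0:ℝ)..T, g t) ^ 2 := hsq
      _ = Δt^2 * (∫ t in (0:ℝ)..T, g t) ^ 2 := by ring
      _ ≤ Δt^2 * (T * J) := by
          apply mul_le_mul_of_nonneg_left CS (sq_nonneg _)
  have hsum : ∑ n ∈ Icc 1 N,
      ‖(∫ t in (0:ℝ)..(n * Δt), f t) - Δt • ∑ k ∈ Icc 1 n, f (k * Δt)‖ ^ 2
        ≤ (N:ℝ) * (Δt^2 * (T * J)) := by
    calc (∑ n ∈ Icc 1 N, ‖(∫ t in (0:ℝ)..(n * Δt), f t) - Δt • ∑ k ∈ Icc 1 n, f (k * Δt)‖ ^ 2)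
        ≤ ∑ _n ∈ Icc 1 N, Δt^2 * (T * J) := Finset.sum_le_sum each
      _ = (N:ℝ) * (Δt^2 * (T * J)) := by
          rw [Finset.sum_const, Nat.card_Icc, Nat.add_sub_cancel, nsmul_eq_mul]
  have hfin : Δt * ((N:ℝ) * (Δt^2 * (T * J))) = T^2 * Δt^2 * J := by
    rw [← hT]; ring
  calc Δt * ∑ n ∈ Icc 1 N,
        ‖(∫ t in (0:ℝ)..(n * Δt), f t) - Δt • ∑ k ∈ Icc 1 n, f (k * Δt)‖ ^ 2
      ≤ Δt * ((N:ℝ) * (Δt^2 * (T * J))) := mul_le_mul_of_nonneg_left hsum hΔt.le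
    _ = T^2 * Δt^2 * J := hfin
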